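/- Let R be a graded primitive G-graded ring with a minimal graded left ideal I, and let V be a faithful graded simple left R-module. Then there exists g ∈ G such that V is isomorphic, as a graded R-module, to the right shift I^{[g]} (where I^{[g]}_h = I_{hg^{-1}}). -/

import Mathlib

namespace GradedAux
open scoped Classical

variable {G : Type*} [DecidableEq G] {M : Type*} [AddCommGroup M]

noncomputable def dec (A : G → AddSubgroup M) (hd : DirectSum.IsInternal A) :
    M ≃+ DirectSum G fun g => A g :=
  (AddEquiv.ofBijective (DirectSum.coeAddMonoidHom A) hd).symm

noncomputable def proj (A : G → AddSubgroup M) (hd : DirectSum.IsInternal A) (h : G) : M →+ M :=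
  ((A h).subtype.comp (DFinsupp.evalAddMonoidHom h)).comp (dec A hd).toAddMonoidHom

lemma proj_apply (A : G → AddSubgroup M) (hd : DirectSum.IsInternal A) (h : G) (x : M) :
    proj A hd h x = ((dec A hd x) h : M) := rfl

lemma proj_mem (A : G → AddSubgroup M) (hd : DirectSum.IsInternal A) (h : G) (x : M) :
    proj A hd h x ∈ A h := ((dec A hd x) h).2

lemma dec_of_mem (A : G → AddSubgroup M) (hd : DirectSum.IsInternal A) {g : G} {x : M}
    (hx : x ∈ A g) : dec A hd x = DirectSum.of (fun i => A i) g ⟨x, hx⟩ := by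
  have h1 : (AddEquiv.ofBijective (DirectSum.coeAddMonoidHom A) hd)
      (DirectSum.of (fun i => A i) g ⟨x, hx⟩) = x :=
    DirectSum.coeAddMonoidHom_of A g (⟨x, hx⟩ : A g)
  rw [show dec A hd = (AddEquiv.ofBijective (DirectSum.coeAddMonoidHom A) hd).symm from rfl,
    AddEquiv.symm_apply_eq, h1]

lemma proj_of_mem (A : G → AddSubgroup M) (hd : DirectSum.IsInternal A) {g : G} (h : G) {x : M}
    (hx : x ∈ A g) : proj A hd h x = if g = h then x else 0 := by
  rw [proj_apply, dec_of_mem A hd hx]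
  by_cases hgh : g = h
  · subst hgh; rw [DirectSum.of_eq_same, if_pos rfl]
  · rw [DirectSum.of_eq_of_ne _ _ _ (Ne.symm hgh), if_neg hgh, ZeroMemClass.coe_zero]

lemma sum_proj (A : G → AddSubgroup M) (hd : DirectSum.IsInternal A) (x : M) :
    ∑ h ∈ (dec A hd x).support, proj A hd h x = x := by
  have key : DirectSum.coeAddMonoidHom A (dec A hd x) = x :=
    (AddEquiv.ofBijective (DirectSum.coeAddMonoidHom A) hd).apply_symm_apply x
  conv_rhs => rw [← key, ← DirectSum.sum_support_of (x := dec A hd x), map_sum]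
  exact Finset.sum_congr rfl fun h _ => by rw [proj_apply, DirectSum.coeAddMonoidHom_of]

lemma proj_eq_zero_of_not_mem_support (A : G → AddSubgroup M) (hd : DirectSum.IsInternal A)
    {h : G} {x : M} (hx : h ∉ (dec A hd x).support) : proj A hd h x = 0 := by
  rw [proj_apply, DFinsupp.notMem_support_iff.mp hx, ZeroMemClass.coe_zero]

lemma proj_mem_closure (A : G → AddSubgroup M) (hd : DirectSum.IsInternal A) (h : G)
    {T : Set M} (hT : ∀ y ∈ T, ∃ g, y ∈ A g) {x : M} (hx : x ∈ AddSubgroup.closure T) :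
    proj A hd h x ∈ AddSubgroup.closure T := by
  have hmem : proj A hd h x ∈ (AddSubgroup.closure T).map (proj A hd h) :=
    AddSubgroup.mem_map_of_mem _ hx
  rw [AddMonoidHom.map_closure] at hmem
  refine (AddSubgroup.closure_le _).mpr ?_ hmem
  rintro _ ⟨y, hy, rfl⟩
  obtain ⟨g, hg⟩ := hT y hy
  rw [proj_of_mem A hd h hg]
  split
  · exact AddSubgroup.subset_closure hy
  · exact zero_mem _

end GradedAux

open GradedAux

/-- If `R` is a graded primitive `G`-graded ring with a minimal graded
left ideal `I` and `V` is a faithful graded simple left `R`-module, then `V ≅ I^{[g]}`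
for some `g ∈ G`, i.e. there is an `R`-module isomorphism `I ≃ V` carrying the
degree-`h` component of `I` into the degree-`hg` component of `V`. -/
theorem faithful_graded_simple_module_iso_shift_of_minimal_graded_left_ideal
    {G : Type*} [Group G] [DecidableEq G] {R : Type*} [Ring R]
    (𝒜 : G → AddSubgroup R)
    (hmul : ∀ g h : G, ∀ x ∈ 𝒜 g, ∀ y ∈ 𝒜 h, x * y ∈ 𝒜 (g * h))
    (hone : (1 : R) ∈ 𝒜 1)
    (hdecomp : DirectSum.IsInternal 𝒜)
    -- `I` is a minimal graded left ideal
    (I : Submodule R R)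
    (hIgr : ∀ x ∈ I, x ∈ AddSubgroup.closure {y : R | y ∈ I ∧ ∃ g, y ∈ 𝒜 g})
    (hIne : I ≠ ⊥)
    (hImin : ∀ J : Submodule R R,
      (∀ x ∈ J, x ∈ AddSubgroup.closure {y : R | y ∈ J ∧ ∃ g, y ∈ 𝒜 g}) →
      J ≤ I → J = ⊥ ∨ J = I)
    -- `V` is a faithful graded simple left `R`-module (witnessing graded primitivity)
    {V : Type*} [AddCommGroup V] [Module R V]
    (𝒱 : G → AddSubgroup V)
    (hVdecomp : DirectSum.IsInternal 𝒱)
    (hVsmul : ∀ g h : G, ∀ r ∈ 𝒜 g, ∀ v ∈ 𝒱 h, r • v ∈ 𝒱 (g * h))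
    (hfaithful : ∀ r : R, (∀ v : V, r • v = 0) → r = 0)
    (hVnz : ∃ (r : R) (v : V), r • v ≠ 0)
    (hVsimple : ∀ W : Submodule R V,
      (∀ x ∈ W, x ∈ AddSubgroup.closure {y : V | y ∈ W ∧ ∃ g, y ∈ 𝒱 g}) →
      W = ⊥ ∨ W = ⊤) :
    ∃ (g : G) (e : I ≃ₗ[R] V), ∀ (h : G) (x : I), (x : R) ∈ 𝒜 h → e x ∈ 𝒱 (h * g) := by
  classical
  -- pick a nonzero element of I
  obtain ⟨x0, hx0I, hx0⟩ := (Submodule.ne_bot_iff I).mp hIne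
  -- faithfulness: x0 acts nontrivially
  have hv' : ∃ w : V, x0 • w ≠ 0 := by
    by_contra hc; push_neg at hc; exact hx0 (hfaithful x0 hc)
  obtain ⟨v', hv'⟩ := hv'
  -- there is a homogeneous vector on which x0 acts nontrivially
  have hhom : ∃ (k : G) (v : V), v ∈ 𝒱 k ∧ x0 • v ≠ 0 := by
    by_contra hc; push_neg at hc
    apply hv'
    rw [← sum_proj 𝒱 hVdecomp v', Finset.smul_sum]
    exact Finset.sum_eq_zero fun h _ => hc h _ (proj_mem 𝒱 hVdecomp h v')
  obtain ⟨k, v, hvk, hxv⟩ := hhom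
  -- homogeneous components of elements of I lie in I
  have hcomp : ∀ x ∈ I, ∀ h : G, proj 𝒜 hdecomp h x ∈ I := by
    intro x hx h
    have h1 := proj_mem_closure 𝒜 hdecomp h (fun y hy => hy.2) (hIgr x hx)
    have h2 : AddSubgroup.closure {y : R | y ∈ I ∧ ∃ g, y ∈ 𝒜 g} ≤ I.toAddSubgroup :=
      (AddSubgroup.closure_le _).mpr fun y hy => hy.1
    exact h2 h1
  -- key compatibility: components of x • v
  have hkill : ∀ (x : R) (h : G),
      proj 𝒜 hdecomp h x • v = proj 𝒱 hVdecomp (h * k) (x • v) := by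
    intro x h
    conv_rhs => rw [← sum_proj 𝒜 hdecomp x, Finset.sum_smul, map_sum]
    have step : ∀ j ∈ (dec 𝒜 hdecomp x).support,
        proj 𝒱 hVdecomp (h * k) (proj 𝒜 hdecomp j x • v) =
          if j = h then proj 𝒜 hdecomp j x • v else 0 := by
      intro j _
      have hmem : proj 𝒜 hdecomp j x • v ∈ 𝒱 (j * k) :=
        hVsmul j k _ (proj_mem 𝒜 hdecomp j x) v hvk
      rw [proj_of_mem 𝒱 hVdecomp (h * k) hmem]
      congr 1
      simp [mul_left_inj]
    rw [Finset.sum_congr rfl step, Finset.sum_ite_eq' (dec 𝒜 hdecomp x).support h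
      (fun j => proj 𝒜 hdecomp j x • v)]
    by_cases hh : h ∈ (dec 𝒜 hdecomp x).support
    · rw [if_pos hh]
    · rw [if_neg hh, proj_eq_zero_of_not_mem_support 𝒜 hdecomp hh, zero_smul]
  have hkill0 : ∀ x : R, x • v = 0 → ∀ h : G, proj 𝒜 hdecomp h x • v = 0 := by
    intro x hx h; rw [hkill x h, hx, map_zero]
  -- the evaluation map
  let φ : I →ₗ[R] V :=
    { toFun := fun x => (x : R) • v
      map_add' := fun a b => by simp [add_smul]
      map_smul' := fun r a => by simp [mul_smul] }
  have hφ : ∀ x : I, φ x = (x : R) • v := fun x => rfl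
  -- the range of φ is a graded submodule
  have hrange : ∀ w ∈ LinearMap.range φ,
      w ∈ AddSubgroup.closure {y : V | y ∈ LinearMap.range φ ∧ ∃ g, y ∈ 𝒱 g} := by
    rintro _ ⟨x, rfl⟩
    rw [hφ, ← sum_proj 𝒜 hdecomp (x : R), Finset.sum_smul]
    refine AddSubgroup.sum_mem _ fun h _ => AddSubgroup.subset_closure ?_
    refine ⟨⟨⟨proj 𝒜 hdecomp h (x : R), hcomp _ x.2 h⟩, rfl⟩, h * k, ?_⟩
    exact hVsmul h k _ (proj_mem 𝒜 hdecomp h (x : R)) v hvk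
  have hWtop : LinearMap.range φ = ⊤ := by
    rcases hVsimple (LinearMap.range φ) hrange with hbot | htop
    · exfalso
      apply hxv
      have : φ ⟨x0, hx0I⟩ ∈ LinearMap.range φ := ⟨_, rfl⟩
      rw [hbot] at this
      simpa [hφ] using this
    · exact htop
  -- the kernel of φ (pushed into R) is a graded submodule contained in I
  set J : Submodule R R := (LinearMap.ker φ).map I.subtype with hJ
  have hJle : J ≤ I := by
    rintro _ ⟨z, _, rfl⟩; exact z.2
  have hJgr : ∀ x ∈ J, x ∈ AddSubgroup.closure {y : R | y ∈ J ∧ ∃ g, y ∈ 𝒜 g} := by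
    rintro _ ⟨z, hz, rfl⟩
    have hzv : (z : R) • v = 0 := by rw [← hφ z]; exact hz
    rw [show (I.subtype z : R) = (z : R) from rfl, ← sum_proj 𝒜 hdecomp (z : R)]
    refine AddSubgroup.sum_mem _ fun h _ => AddSubgroup.subset_closure ?_
    refine ⟨⟨⟨proj 𝒜 hdecomp h (z : R), hcomp _ z.2 h⟩, ?_, rfl⟩, h, proj_mem 𝒜 hdecomp h _⟩
    show φ _ = 0
    rw [hφ]
    exact hkill0 _ hzv h
  have hJbot : J = ⊥ := by
    rcases hImin J hJgr hJle with hbot | htop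
    · exact hbot
    · exfalso
      apply hxv
      have hx0J : x0 ∈ J := htop ▸ hx0I
      obtain ⟨z, hz, hze⟩ := hx0J
      have : (z : R) • v = 0 := by rw [← hφ z]; exact hz
      rw [show x0 = (z : R) from hze.symm]
      exact this
  have hker : LinearMap.ker φ = ⊥ := by
    rw [eq_bot_iff]
    intro z hz
    have : (z : R) ∈ J := ⟨z, hz, rfl⟩
    rw [hJbot] at this
    simpa [Submodule.mem_bot] using Subtype.ext (by simpa using this)
  have hbij : Function.Bijective φ :=
    ⟨LinearMap.ker_eq_bot.mp hker, LinearMap.range_eq_top.mp hWtop⟩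
  refine ⟨k, LinearEquiv.ofBijective φ hbij, fun h x hx => ?_⟩
  show φ x ∈ 𝒱 (h * k)
  rw [hφ]
  exact hVsmul h k _ hx v hvk
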